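/- Let x_1, …, x_n be pairwise distinct vectors in ℝ^d that span ℝ^d, with the zero vector in the convex hull of {x_1, …, x_n}. Let p_1, …, p_n and q_1, …, q_n be positive reals with ∑_{i=1}^n p_i = 1 and ∑_{i=1}^n q_i = 1. If for every index j with 1 ≤ j ≤ n one has ∑_{i ≠ j} (p_i − q_i) · (x_j − x_i)/‖x_j − x_i‖ = 0, then p_i = q_i for all 1 ≤ i ≤ n. In other words, a discrete probability distribution on the points x_1, …, x_n is uniquely determined by its spatial quantile index function evaluated at the support points x_1, …, x_n. -/

import Mathlib

open MeasureTheory Finset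
open scoped RealInnerProductSpace ENNReal

section Aux

/-- 1-D strict conditional negative definiteness of the distance kernel, finitary proof. -/
lemma oneD {ι : Type*} [DecidableEq ι] (s : Finset ι) :
    ∀ t r : ι → ℝ, (∑ i ∈ s, r i = 0) →
      (∑ j ∈ s, ∑ i ∈ s, r j * r i * |t j - t i| ≤ 0) ∧
      (Set.InjOn t s → ∑ j ∈ s, ∑ i ∈ s, r j * r i * |t j - t i| = 0 →
        ∀ i ∈ s, r i = 0) := by
  induction s using Finset.strongInduction with
  | _ s ih =>
    intro t r hsum
    rcases s.eq_empty_or_nonempty with rfl | hs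
    · simp
    obtain ⟨i0, hi0s, hi0max⟩ := s.exists_max_image t hs
    rcases (s.erase i0).eq_empty_or_nonempty with he | hs'
    · have hss : s = {i0} := by
        rcases (Finset.erase_eq_empty_iff s i0).1 he with h1 | h1
        · exact absurd h1 (Finset.nonempty_iff_ne_empty.1 hs)
        · exact h1
      subst hss
      have hr0 : r i0 = 0 := by simpa using hsum
      constructor
      · simp
      · intro _ _ i hi
        rw [Finset.mem_singleton] at hi
        subst hi; exact hr0
    obtain ⟨i1, hi1s', hi1max⟩ := (s.erase i0).exists_max_image t hs'
    have hi1s : i1 ∈ s := Finset.mem_of_mem_erase hi1s'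
    have hi1ne : i1 ≠ i0 := Finset.ne_of_mem_erase hi1s'
    have hΔ : 0 ≤ t i0 - t i1 := sub_nonneg.2 (hi0max i1 hi1s)
    set s' := s.erase i0 with hs'def
    set r' := Function.update r i1 (r i1 + r i0) with hr'def
    have hsumS' : ∑ i ∈ s', r i = - r i0 := by
      have := Finset.add_sum_erase s r hi0s
      linarith [this, hsum]
    have hsum' : ∑ i ∈ s', r' i = 0 := by
      have h1 : ∑ i ∈ s', r' i = (r i1 + r i0) + ∑ i ∈ s'.erase i1, r i := by
        rw [hr'def, Finset.sum_update_of_mem hi1s', Finset.sdiff_singleton_eq_erase]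
      have h2 : r i1 + ∑ i ∈ s'.erase i1, r i = ∑ i ∈ s', r i :=
        Finset.add_sum_erase s' r hi1s'
      linarith [h1, h2, hsumS']
    have ihres := ih s' (Finset.erase_ssubset hi0s) t r' hsum'
    -- splitting identities
    have split1 : ∑ j ∈ s, ∑ i ∈ s, r j * r i * |t j - t i|
        = (∑ j ∈ s', ∑ i ∈ s', r j * r i * |t j - t i|)
          + 2 * (r i0 * ∑ j ∈ s', r j * |t i0 - t j|) := by
      have houter : ∀ (f : ι → ℝ), ∑ j ∈ s, f j = f i0 + ∑ j ∈ s', f j :=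
        fun f => (Finset.add_sum_erase s f hi0s).symm
      rw [houter]
      have hinner : ∀ j, ∑ i ∈ s, r j * r i * |t j - t i|
          = r j * r i0 * |t j - t i0| + ∑ i ∈ s', r j * r i * |t j - t i| :=
        fun j => (Finset.add_sum_erase s _ hi0s).symm
      rw [hinner]
      have : ∀ j ∈ s', ∑ i ∈ s, r j * r i * |t j - t i|
          = r j * r i0 * |t j - t i0| + ∑ i ∈ s', r j * r i * |t j - t i| :=
        fun j _ => hinner j
      rw [Finset.sum_congr rfl this, Finset.sum_add_distrib]
      have e1 : ∑ j ∈ s', r j * r i0 * |t j - t i0|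
          = r i0 * ∑ j ∈ s', r j * |t i0 - t j| := by
        rw [Finset.mul_sum]
        apply Finset.sum_congr rfl
        intro j _
        rw [abs_sub_comm]; ring
      have e2 : ∑ i ∈ s', r i0 * r i * |t i0 - t i|
          = r i0 * ∑ j ∈ s', r j * |t i0 - t j| := by
        rw [Finset.mul_sum]
        apply Finset.sum_congr rfl
        intro j _; ring
      rw [e1, e2]
      simp only [sub_self, abs_zero, mul_zero]
      ring
    have split2 : ∑ j ∈ s', ∑ i ∈ s', r' j * r' i * |t j - t i|
        = (∑ j ∈ s', ∑ i ∈ s', r j * r i * |t j - t i|)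
          + 2 * (r i0 * ∑ j ∈ s', r j * |t i1 - t j|) := by
      set s'' := s'.erase i1 with hs''def
      have hrr : ∀ i ∈ s'', r' i = r i := fun i hi =>
        Function.update_of_ne (Finset.ne_of_mem_erase hi) _ _
      have houter : ∀ (f : ι → ℝ), ∑ j ∈ s', f j = f i1 + ∑ j ∈ s'', f j :=
        fun f => (Finset.add_sum_erase s' f hi1s').symm
      have hinner : ∀ (ρ : ι → ℝ) j, ∑ i ∈ s', ρ j * ρ i * |t j - t i|
          = ρ j * ρ i1 * |t j - t i1| + ∑ i ∈ s'', ρ j * ρ i * |t j - t i| :=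
        fun ρ j => (Finset.add_sum_erase s' _ hi1s').symm
      have expand : ∀ ρ : ι → ℝ, ∑ j ∈ s', ∑ i ∈ s', ρ j * ρ i * |t j - t i|
          = ρ i1 * ρ i1 * |t i1 - t i1|
            + ∑ i ∈ s'', ρ i1 * ρ i * |t i1 - t i|
            + ∑ j ∈ s'', ρ j * ρ i1 * |t j - t i1|
            + ∑ j ∈ s'', ∑ i ∈ s'', ρ j * ρ i * |t j - t i| := by
        intro ρ
        rw [houter, hinner]
        rw [Finset.sum_congr rfl (fun j _ => hinner ρ j), Finset.sum_add_distrib]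
        ring
      rw [expand r, expand r']
      have hcongr : ∀ (a b : ι → ℝ), (∀ i ∈ s'', a i = b i) →
          ∑ i ∈ s'', a i = ∑ i ∈ s'', b i := fun a b hab => Finset.sum_congr rfl hab
      have h1 : ∑ i ∈ s'', r' i1 * r' i * |t i1 - t i|
          = ∑ i ∈ s'', (r i1 + r i0) * r i * |t i1 - t i| := by
        apply hcongr; intro i hi; rw [hrr i hi, hr'def, Function.update_self]
      have h2 : ∑ j ∈ s'', r' j * r' i1 * |t j - t i1|
          = ∑ j ∈ s'', r j * (r i1 + r i0) * |t j - t i1| := by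
        apply hcongr; intro i hi; rw [hrr i hi, hr'def, Function.update_self]
      have h3 : ∑ j ∈ s'', ∑ i ∈ s'', r' j * r' i * |t j - t i|
          = ∑ j ∈ s'', ∑ i ∈ s'', r j * r i * |t j - t i| := by
        apply hcongr; intro j hj
        apply hcongr; intro i hi
        rw [hrr i hi, hrr j hj]
      rw [h1, h2, h3, hr'def, Function.update_self]
      have hsplit : ∑ j ∈ s', r j * |t i1 - t j|
          = r i1 * |t i1 - t i1| + ∑ j ∈ s'', r j * |t i1 - t j| :=
        (Finset.add_sum_erase s' _ hi1s').symm
      rw [hsplit]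
      simp only [sub_self, abs_zero, mul_zero]
      have e1 : ∑ i ∈ s'', (r i1 + r i0) * r i * |t i1 - t i|
          = ∑ i ∈ s'', r i1 * r i * |t i1 - t i| + ∑ i ∈ s'', r i0 * (r i * |t i1 - t i|) := by
        rw [← Finset.sum_add_distrib]
        apply Finset.sum_congr rfl; intro i _; ring
      have e2 : ∑ j ∈ s'', r j * (r i1 + r i0) * |t j - t i1|
          = ∑ j ∈ s'', r j * r i1 * |t j - t i1| + ∑ j ∈ s'', r i0 * (r j * |t i1 - t j|) := by
        rw [← Finset.sum_add_distrib]
        apply Finset.sum_congr rfl; intro i _; rw [abs_sub_comm (t i) (t i1)]; ring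
      rw [e1, e2, ← Finset.mul_sum]
      ring
    have hcross : r i0 * (∑ j ∈ s', r j * |t i0 - t j|)
          - r i0 * (∑ j ∈ s', r j * |t i1 - t j|)
        = -(r i0 ^ 2 * (t i0 - t i1)) := by
      have hsum0 : ∑ j ∈ s', (r j * |t i0 - t j| - r j * |t i1 - t j|)
          = (t i0 - t i1) * (- r i0) := by
        have hterm : ∀ j ∈ s', r j * |t i0 - t j| - r j * |t i1 - t j|
            = (t i0 - t i1) * r j := by
          intro j hj
          rw [abs_of_nonneg (sub_nonneg.2 (hi0max j (Finset.mem_of_mem_erase hj))),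
            abs_of_nonneg (sub_nonneg.2 (hi1max j hj))]
          ring
        rw [Finset.sum_congr rfl hterm, ← Finset.mul_sum, hsumS']
      calc r i0 * (∑ j ∈ s', r j * |t i0 - t j|)
            - r i0 * (∑ j ∈ s', r j * |t i1 - t j|)
          = r i0 * ((t i0 - t i1) * (- r i0)) := by
            rw [← mul_sub, ← Finset.sum_sub_distrib, hsum0]
        _ = -(r i0 ^ 2 * (t i0 - t i1)) := by ring
    have key : ∑ j ∈ s, ∑ i ∈ s, r j * r i * |t j - t i|
        = (∑ j ∈ s', ∑ i ∈ s', r' j * r' i * |t j - t i|)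
          - 2 * (r i0 ^ 2 * (t i0 - t i1)) := by
      rw [split1, split2]
      linarith [hcross]
    constructor
    · nlinarith [ihres.1, sq_nonneg (r i0), hΔ, key]
    · intro hinj hQ0
      have hΔpos : 0 < t i0 - t i1 := by
        rcases lt_or_eq_of_le hΔ with h | h
        · exact h
        · exfalso
          exact hi1ne (hinj hi1s hi0s (by linarith))
      have hQ' : ∑ j ∈ s', ∑ i ∈ s', r' j * r' i * |t j - t i|
          = 2 * (r i0 ^ 2 * (t i0 - t i1)) := by linarith [key, hQ0]
      have hsq : r i0 ^ 2 ≤ 0 := by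
        have h1 : 2 * (r i0 ^ 2 * (t i0 - t i1)) ≤ 0 := hQ' ▸ ihres.1
        nlinarith [hΔpos]
      have hri0 : r i0 = 0 := by
        have h2 : r i0 ^ 2 = 0 := le_antisymm hsq (sq_nonneg _)
        exact (pow_eq_zero_iff (by norm_num : (2:ℕ) ≠ 0)).1 h2
      have hQ'0 : ∑ j ∈ s', ∑ i ∈ s', r' j * r' i * |t j - t i| = 0 := by
        rw [hQ', hri0]; ring
      have hinj' : Set.InjOn t ↑s' := hinj.mono (by
        intro i hi
        exact Finset.mem_of_mem_erase hi)
      have hr'0 := ihres.2 hinj' hQ'0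
      intro i hi
      by_cases hii0 : i = i0
      · subst hii0; exact hri0
      · have his' : i ∈ s' := Finset.mem_erase.2 ⟨hii0, hi⟩
        by_cases hii1 : i = i1
        · have := hr'0 i his'
          rw [hr'def, hii1, Function.update_self] at this
          rw [hii1]
          linarith [this, hri0]
        · have := hr'0 i his'
          rwa [hr'def, Function.update_of_ne hii1] at this

noncomputable def phiAux {d : ℕ} (v : EuclideanSpace ℝ (Fin d)) : ℝ :=
  ∫ z in Metric.closedBall (0 : EuclideanSpace ℝ (Fin d)) 1, |⟪z, v⟫|

lemma phiAux_isometry {d : ℕ} (e : EuclideanSpace ℝ (Fin d) ≃ₗᵢ[ℝ] EuclideanSpace ℝ (Fin d))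
    (v : EuclideanSpace ℝ (Fin d)) : phiAux (e v) = phiAux v := by
  have hpre : e ⁻¹' (Metric.closedBall (0 : EuclideanSpace ℝ (Fin d)) 1)
      = Metric.closedBall 0 1 := by
    ext z
    simp [Metric.mem_closedBall, dist_zero_right, e.norm_map]
  have := (e.measurePreserving).setIntegral_preimage_emb
    (e.toHomeomorph.measurableEmbedding) (fun z => |⟪z, e v⟫|)
    (Metric.closedBall (0 : EuclideanSpace ℝ (Fin d)) 1)
  rw [hpre] at this
  rw [phiAux, ← this, phiAux]
  apply setIntegral_congr_fun (by measurability)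
  intro z _
  simp [e.inner_map_map]

lemma phiAux_smul {d : ℕ} (a : ℝ) (ha : 0 ≤ a) (v : EuclideanSpace ℝ (Fin d)) :
    phiAux (a • v) = a * phiAux v := by
  rw [phiAux, phiAux, ← integral_const_mul]
  apply setIntegral_congr_fun (by measurability)
  intro z _
  show |⟪z, a • v⟫| = a * |⟪z, v⟫|
  rw [real_inner_smul_right, abs_mul, abs_of_nonneg ha]

lemma phiAux_norm_eq {d : ℕ} {v w : EuclideanSpace ℝ (Fin d)} (h : ‖v‖ = ‖w‖) :
    phiAux v = phiAux w := by
  have := phiAux_isometry (Submodule.reflection (ℝ ∙ (v - w))ᗮ) v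
  rw [Submodule.reflection_sub h] at this
  exact this.symm

lemma phiAux_eq {d : ℕ} (v₀ : EuclideanSpace ℝ (Fin d)) (hv₀ : ‖v₀‖ = 1)
    (v : EuclideanSpace ℝ (Fin d)) : phiAux v = phiAux v₀ * ‖v‖ := by
  have h1 : phiAux v = phiAux (‖v‖ • v₀) := by
    apply phiAux_norm_eq
    rw [norm_smul, Real.norm_eq_abs, abs_of_nonneg (norm_nonneg v), hv₀, mul_one]
  rw [h1, phiAux_smul _ (norm_nonneg v), mul_comm]

lemma phiAux_pos {d : ℕ} {v : EuclideanSpace ℝ (Fin d)} (hv : v ≠ 0) : 0 < phiAux v := by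
  have hcont : Continuous fun z : EuclideanSpace ℝ (Fin d) => |⟪z, v⟫| :=
    (continuous_id.inner continuous_const).abs
  have hint : IntegrableOn (fun z : EuclideanSpace ℝ (Fin d) => |⟪z, v⟫|)
      (Metric.closedBall 0 1) volume :=
    hcont.continuousOn.integrableOn_compact (isCompact_closedBall _ _)
  rw [phiAux, setIntegral_pos_iff_support_of_nonneg_ae
    (Filter.Eventually.of_forall fun z => abs_nonneg _) hint]
  set K : Submodule ℝ (EuclideanSpace ℝ (Fin d)) := (ℝ ∙ v)ᗮ with hK
  have hKtop : K ≠ ⊤ := by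
    intro htop
    have hvK : v ∈ K := htop ▸ Submodule.mem_top
    have := Submodule.inner_right_of_mem_orthogonal (Submodule.mem_span_singleton_self v) hvK
    exact hv ((inner_self_eq_zero (𝕜 := ℝ)).1 this)
  have hK0 : volume (K : Set (EuclideanSpace ℝ (Fin d))) = 0 :=
    Measure.addHaar_submodule _ _ hKtop
  have hsub : Metric.closedBall (0 : EuclideanSpace ℝ (Fin d)) 1 \ (K : Set _)
      ⊆ (Function.support fun z => |⟪z, v⟫|) ∩ Metric.closedBall 0 1 := by
    intro z hz
    refine ⟨?_, hz.1⟩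
    simp only [Function.mem_support, abs_ne_zero]
    intro hzero
    exact hz.2 (Submodule.mem_orthogonal_singleton_iff_inner_left.2 hzero)
  calc (0 : ℝ≥0∞) < volume (Metric.closedBall (0 : EuclideanSpace ℝ (Fin d)) 1) :=
        Metric.measure_closedBall_pos volume _ one_pos
    _ = volume (Metric.closedBall (0 : EuclideanSpace ℝ (Fin d)) 1 \ (K : Set _)) :=
        (measure_diff_null hK0).symm
    _ ≤ _ := measure_mono hsub

lemma exists_inner_ne {d : ℕ} (s : Finset (EuclideanSpace ℝ (Fin d))) :
    (∀ w ∈ s, w ≠ 0) → ∃ u : EuclideanSpace ℝ (Fin d), ∀ w ∈ s, ⟪u, w⟫ ≠ 0 := by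
  classical
  induction s using Finset.induction_on with
  | empty => exact fun _ => ⟨0, by simp⟩
  | @insert a s' ha ih =>
    intro hs
    obtain ⟨u, hu⟩ := ih fun w hw => hs w (Finset.mem_insert_of_mem hw)
    have hane : (⟪a, a⟫ : ℝ) ≠ 0 :=
      inner_self_ne_zero.2 (hs a (Finset.mem_insert_self a s'))
    set bad : Finset ℝ :=
      insert (-⟪u, a⟫ / ⟪a, a⟫) (s'.image fun w => -⟪u, w⟫ / ⟪a, w⟫) with hbad
    obtain ⟨ε, hε⟩ := Infinite.exists_notMem_finset bad
    refine ⟨u + ε • a, ?_⟩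
    intro w hw
    rcases Finset.mem_insert.1 hw with rfl | hw'
    · rw [inner_add_left, real_inner_smul_left]
      intro hcontra
      apply hε
      have hev : ε = -⟪u, w⟫ / ⟪w, w⟫ := by
        rw [eq_div_iff hane]
        linarith
      rw [hbad, hev]
      exact Finset.mem_insert_self _ _
    · rw [inner_add_left, real_inner_smul_left]
      by_cases haw : (⟪a, w⟫ : ℝ) = 0
      · rw [haw]
        simpa using hu w hw'
      · intro hcontra
        apply hε
        have hev : ε = -⟪u, w⟫ / ⟪a, w⟫ := by
          rw [eq_div_iff haw]
          linarith
        rw [hbad, hev]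
        exact Finset.mem_insert_of_mem (Finset.mem_image_of_mem _ hw')

end Aux

/-- A discrete probability distribution on pairwise distinct points
`x 1, …, x n` spanning `ℝ^d` with `0` in their convex hull is uniquely determined by its
spatial quantile index function evaluated at the support points. -/
theorem stmt_2 {d n : ℕ} (x : Fin n → EuclideanSpace ℝ (Fin d))
    (hinj : Function.Injective x)
    (hspan : Submodule.span ℝ (Set.range x) = ⊤)
    (hzero : (0 : EuclideanSpace ℝ (Fin d)) ∈ convexHull ℝ (Set.range x))
    (p q : Fin n → ℝ) (hp : ∀ i, 0 < p i) (hq : ∀ i, 0 < q i)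
    (hpsum : ∑ i, p i = 1) (hqsum : ∑ i, q i = 1)
    (h : ∀ j, ∑ i ∈ Finset.univ.erase j,
        ((p i - q i) / ‖x j - x i‖) • (x j - x i) = 0) :
    p = q := by
  classical
  have hrsum : ∑ i, (p i - q i) = 0 := by
    rw [Finset.sum_sub_distrib, hpsum, hqsum, sub_self]
  suffices hr0 : ∀ i, p i - q i = 0 by
    funext i
    exact sub_eq_zero.1 (hr0 i)
  by_cases hn : n ≤ 1
  · intro i
    haveI : Subsingleton (Fin n) := by
      rcases Nat.le_one_iff_eq_zero_or_eq_one.1 hn with rfl | rfl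
      · exact ⟨fun a => a.elim0⟩
      · infer_instance
    have := Fintype.sum_subsingleton (fun k => p k - q k) i
    rw [hrsum] at this
    exact this.symm
  push_neg at hn
  -- distinct points give nonzero differences
  have hxne : ∀ i j : Fin n, i ≠ j → x i - x j ≠ 0 := fun i j hij =>
    sub_ne_zero.2 fun hc => hij (hinj hc)
  have hnorm : ∀ i j : Fin n, i ≠ j → ‖x i - x j‖ ≠ 0 := fun i j hij =>
    norm_ne_zero_iff.2 (hxne i j hij)
  -- a unit vector
  have h01 : (⟨0, by omega⟩ : Fin n) ≠ ⟨1, by omega⟩ := by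
    simp [Fin.ext_iff]
  set w0 := x ⟨0, by omega⟩ - x ⟨1, by omega⟩ with hw0def
  have hw0 : w0 ≠ 0 := hxne _ _ h01
  set v₀ := ‖w0‖⁻¹ • w0 with hv₀def
  have hv₀ : ‖v₀‖ = 1 := norm_smul_inv_norm hw0
  ----------------------------------------------------------------
  -- STEP 1 : the energy ∑∑ r_j r_i ‖x_j - x_i‖ vanishes
  ----------------------------------------------------------------
  set c : Fin n → Fin n → ℝ :=
    fun j i => (p j - q j) * (((p i - q i) / ‖x j - x i‖) * ⟪x j - x i, x i⟫) with hcdef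
  have hBA : ∀ j i : Fin n, i ≠ j →
      (⟪x j - x i, x j⟫ : ℝ) = ⟪x j - x i, x i⟫ + ‖x j - x i‖ * ‖x j - x i‖ := by
    intro j i hij
    have h1 : (⟪x j - x i, x j⟫ : ℝ) - ⟪x j - x i, x i⟫ = ⟪x j - x i, x j - x i⟫ :=
      (inner_sub_right _ _ _).symm
    rw [real_inner_self_eq_norm_mul_norm] at h1
    linarith
  have hA : ∀ j, ∑ i ∈ Finset.univ.erase j, (p j - q j) * (p i - q i) * ‖x j - x i‖
      = - ∑ i ∈ Finset.univ.erase j, c j i := by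
    intro j
    have hterm : ∀ i ∈ Finset.univ.erase j,
        (p j - q j) * (p i - q i) * ‖x j - x i‖
        = (p j - q j) * (((p i - q i) / ‖x j - x i‖) * ⟪x j - x i, x j⟫) - c j i := by
      intro i hi
      have hij : i ≠ j := Finset.ne_of_mem_erase hi
      have hw : ‖x j - x i‖ ≠ 0 := hnorm j i (Ne.symm hij)
      rw [hBA j i hij, hcdef]
      field_simp
      ring
    rw [Finset.sum_congr rfl hterm, Finset.sum_sub_distrib]
    have hzero : ∑ i ∈ Finset.univ.erase j,
        (p j - q j) * (((p i - q i) / ‖x j - x i‖) * ⟪x j - x i, x j⟫) = 0 := by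
      rw [← Finset.mul_sum]
      have h0 := congrArg (fun z => (⟪z, x j⟫ : ℝ)) (h j)
      simp only [sum_inner, real_inner_smul_left, inner_zero_left] at h0
      rw [h0, mul_zero]
    rw [hzero, zero_sub]
  have hswap : ∑ j, ∑ i ∈ Finset.univ.erase j, c j i
      = ∑ j, ∑ i ∈ Finset.univ.erase j, c i j := by
    exact Finset.sum_comm' (by
      intro x1 y1
      simp only [Finset.mem_univ, true_and, and_true, Finset.mem_erase]
      exact ne_comm)
  have hanti : ∀ j, ∀ i ∈ Finset.univ.erase j,
      c j i + c i j = -((p j - q j) * (p i - q i) * ‖x j - x i‖) := by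
    intro j i hi
    have hij : i ≠ j := Finset.ne_of_mem_erase hi
    have hw : ‖x j - x i‖ ≠ 0 := hnorm j i (Ne.symm hij)
    have hflip : x i - x j = -(x j - x i) := (neg_sub _ _).symm
    rw [hcdef]
    simp only [hflip, inner_neg_left, norm_neg]
    rw [hBA j i hij]
    field_simp
    ring
  have hE' : ∑ j, ∑ i ∈ Finset.univ.erase j,
      (p j - q j) * (p i - q i) * ‖x j - x i‖ = 0 := by
    have h1 : ∑ j, ∑ i ∈ Finset.univ.erase j,
        (p j - q j) * (p i - q i) * ‖x j - x i‖
        = - ∑ j, ∑ i ∈ Finset.univ.erase j, c j i := by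
      rw [← Finset.sum_neg_distrib]
      exact Finset.sum_congr rfl fun j _ => hA j
    have h2 : (∑ j, ∑ i ∈ Finset.univ.erase j, c j i)
        + ∑ j, ∑ i ∈ Finset.univ.erase j, c j i
        = - ∑ j, ∑ i ∈ Finset.univ.erase j,
            (p j - q j) * (p i - q i) * ‖x j - x i‖ := by
      nth_rewrite 2 [hswap]
      rw [← Finset.sum_add_distrib]
      rw [← Finset.sum_neg_distrib]
      apply Finset.sum_congr rfl
      intro j _
      rw [← Finset.sum_add_distrib, ← Finset.sum_neg_distrib]
      exact Finset.sum_congr rfl fun i hi => hanti j i hi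
    linarith [h1, h2]
  have hE : ∑ j, ∑ i, (p j - q j) * (p i - q i) * ‖x j - x i‖ = 0 := by
    rw [← hE']
    apply Finset.sum_congr rfl
    intro j _
    rw [← Finset.add_sum_erase _ _ (Finset.mem_univ j)]
    simp
  ----------------------------------------------------------------
  -- STEP 2 : a direction with pairwise distinct projections
  ----------------------------------------------------------------
  obtain ⟨u, hu⟩ := exists_inner_ne
    (Finset.image (fun ij : Fin n × Fin n => x ij.1 - x ij.2)
      ((Finset.univ ×ˢ Finset.univ).filter fun ij => ij.1 ≠ ij.2))
    (by
      intro w hw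
      simp only [Finset.mem_image, Finset.mem_filter] at hw
      obtain ⟨ij, ⟨_, hne⟩, rfl⟩ := hw
      exact hxne _ _ hne)
  have hu' : ∀ i j : Fin n, i ≠ j → (⟪u, x i - x j⟫ : ℝ) ≠ 0 := by
    intro i j hij
    apply hu
    refine Finset.mem_image.2 ⟨(i, j), ?_, rfl⟩
    exact Finset.mem_filter.2 ⟨Finset.mem_product.2 ⟨Finset.mem_univ _, Finset.mem_univ _⟩, hij⟩
  set u₀ : EuclideanSpace ℝ (Fin d) := (‖u‖ + 1)⁻¹ • u with hu₀def
  have hpos1 : (0:ℝ) < ‖u‖ + 1 := by positivity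
  have hu₀norm : ‖u₀‖ < 1 := by
    rw [hu₀def, norm_smul, Real.norm_eq_abs, abs_of_pos (inv_pos.2 hpos1),
      inv_mul_eq_div, div_lt_one hpos1]
    linarith [norm_nonneg u]
  have hu₀' : ∀ i j : Fin n, i ≠ j → (⟪u₀, x i - x j⟫ : ℝ) ≠ 0 := by
    intro i j hij
    rw [hu₀def, real_inner_smul_left]
    exact mul_ne_zero (by positivity) (hu' i j hij)
  have htinj : Set.InjOn (fun i => (⟪u₀, x i⟫ : ℝ)) (Finset.univ : Finset (Fin n)) := by
    intro i _ j _ hij2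
    by_contra hne
    apply hu₀' i j hne
    rw [inner_sub_right]
    simpa using sub_eq_zero.2 hij2
  ----------------------------------------------------------------
  -- STEP 3 : integral of the projected energies over the unit ball
  ----------------------------------------------------------------
  set g : EuclideanSpace ℝ (Fin d) → ℝ :=
    fun z => ∑ j, ∑ i, (p j - q j) * (p i - q i) * |⟪z, x j - x i⟫| with hgdef
  have hg_eq : ∀ z, g z = ∑ j, ∑ i,
      (p j - q j) * (p i - q i)
        * |(fun k => (⟪z, x k⟫ : ℝ)) j - (fun k => (⟪z, x k⟫ : ℝ)) i| := by
    intro z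
    rw [hgdef]
    simp only [inner_sub_right]
  have hgle : ∀ z, g z ≤ 0 := by
    intro z
    rw [hg_eq]
    exact (oneD Finset.univ (fun k => (⟪z, x k⟫ : ℝ)) (fun k => p k - q k) hrsum).1
  have hcont : ∀ w : EuclideanSpace ℝ (Fin d),
      Continuous fun z : EuclideanSpace ℝ (Fin d) => (⟪z, w⟫ : ℝ) := fun w =>
    continuous_id.inner continuous_const
  have hgcont : Continuous g := by
    rw [hgdef]
    apply continuous_finset_sum
    intro j _
    apply continuous_finset_sum
    intro i _
    exact continuous_const.mul ((hcont _).abs)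
  have hintegrable : ∀ j i : Fin n,
      IntegrableOn (fun z : EuclideanSpace ℝ (Fin d) =>
        (p j - q j) * (p i - q i) * |⟪z, x j - x i⟫|)
        (Metric.closedBall 0 1) volume := fun j i =>
    (continuous_const.mul ((hcont _).abs)).continuousOn.integrableOn_compact
      (isCompact_closedBall _ _)
  have hint : ∫ z in Metric.closedBall (0 : EuclideanSpace ℝ (Fin d)) 1, g z = 0 := by
    have h1 : ∫ z in Metric.closedBall (0 : EuclideanSpace ℝ (Fin d)) 1, g z
        = ∑ j, ∑ i, (p j - q j) * (p i - q i) * phiAux (x j - x i) := by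
      rw [hgdef]
      rw [integral_finset_sum _ fun j _ =>
        (integrable_finset_sum _ fun i _ => hintegrable j i)]
      apply Finset.sum_congr rfl
      intro j _
      rw [integral_finset_sum _ fun i _ => hintegrable j i]
      apply Finset.sum_congr rfl
      intro i _
      exact integral_const_mul _ _
    rw [h1]
    have h2 : ∀ j i : Fin n, (p j - q j) * (p i - q i) * phiAux (x j - x i)
        = phiAux v₀ * ((p j - q j) * (p i - q i) * ‖x j - x i‖) := by
      intro j i
      rw [phiAux_eq v₀ hv₀]
      ring
    calc ∑ j, ∑ i, (p j - q j) * (p i - q i) * phiAux (x j - x i)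
        = ∑ j, ∑ i, phiAux v₀ * ((p j - q j) * (p i - q i) * ‖x j - x i‖) := by
          exact Finset.sum_congr rfl fun j _ => Finset.sum_congr rfl fun i _ => h2 j i
      _ = phiAux v₀ * ∑ j, ∑ i, (p j - q j) * (p i - q i) * ‖x j - x i‖ := by
          rw [Finset.mul_sum]
          exact Finset.sum_congr rfl fun j _ => (Finset.mul_sum _ _ _).symm
      _ = 0 := by rw [hE, mul_zero]
  ----------------------------------------------------------------
  -- STEP 4 : conclude g u₀ = 0, hence r = 0
  ----------------------------------------------------------------
  have hgu₀ : g u₀ = 0 := by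
    by_contra hne0
    have hlt : g u₀ < 0 := (hgle u₀).lt_of_ne hne0
    have hopen : IsOpen {z : EuclideanSpace ℝ (Fin d) | g z < 0} :=
      isOpen_lt hgcont continuous_const
    obtain ⟨ε, hε, hball⟩ := Metric.isOpen_iff.1 hopen u₀ hlt
    set ε' := min ε (1 - ‖u₀‖) with hε'def
    have hε' : 0 < ε' := lt_min hε (by linarith [hu₀norm])
    have hballsub : Metric.ball u₀ ε'
        ⊆ (Function.support fun z => -(g z)) ∩ Metric.closedBall 0 1 := by
      intro z hz
      have hz1 : z ∈ Metric.ball u₀ ε := Metric.ball_subset_ball (min_le_left _ _) hz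
      have hgz : g z < 0 := hball hz1
      constructor
      · simp only [Function.mem_support, neg_eq_zero]
        intro hcon
        linarith [hgz]
      · rw [Metric.mem_closedBall, dist_zero_right]
        have hdz : dist z u₀ < ε' := Metric.mem_ball.1 hz
        have htri : ‖z‖ ≤ ‖z - u₀‖ + ‖u₀‖ := by
          have := norm_add_le (z - u₀) u₀
          simpa using this
        rw [dist_eq_norm] at hdz
        have : ε' ≤ 1 - ‖u₀‖ := min_le_right _ _
        linarith
    have hpos : 0 < ∫ z in Metric.closedBall (0 : EuclideanSpace ℝ (Fin d)) 1, -(g z) := by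
      rw [setIntegral_pos_iff_support_of_nonneg_ae
        (Filter.Eventually.of_forall fun z => neg_nonneg.2 (hgle z))
        ((hgcont.neg).continuousOn.integrableOn_compact (isCompact_closedBall _ _))]
      exact lt_of_lt_of_le (Metric.measure_ball_pos volume u₀ hε') (measure_mono hballsub)
    rw [integral_neg, hint, neg_zero] at hpos
    exact lt_irrefl 0 hpos
  intro i
  refine (oneD Finset.univ (fun k => (⟪u₀, x k⟫ : ℝ)) (fun k => p k - q k) hrsum).2
    htinj ?_ i (Finset.mem_univ i)
  rw [← hg_eq u₀]
  exact hgu₀
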